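/- Let H be a finite perfect group and a₁, c₁, a₂, c₂ ∈ H with: ord(a₁) and ord(c₁) even, ⟨a₁,c₁⟩ = H, ⟨a₂,c₂⟩ = H, and ν(a₁,c₁) := ord(a₁)ord(c₁)ord(a₁c₁) coprime to ν(a₂,c₂). Then in G = (H × H) ⋊ ⟨g⟩, where g has order 4 and acts by swapping the two factors of H × H, the elements a = (a₁, a₂, g²) and c = (c₁, c₂, g²) generate the index-2 subgroup G⁰ = H × H × ⟨g²⟩. -/

import Mathlib

/-- The automorphism of `H × H` swapping the two factors. -/
def swapAut (H : Type*) [Group H] : MulAut (H × H) := (MulEquiv.prodComm : H × H ≃* H × H)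

lemma swapAut_sq (H : Type*) [Group H] : swapAut H ^ 2 = 1 := by
  ext x <;> simp [swapAut, pow_two, MulAut.mul_apply]

lemma swapAut_pow_mod (H : Type*) [Group H] (k : ℕ) :
    swapAut H ^ k = swapAut H ^ (k % 2) := by
  conv_lhs => rw [← Nat.div_add_mod k 2]
  rw [pow_add, pow_mul, swapAut_sq, one_pow, one_mul]

/-- The action of the cyclic group of order 4 on `H × H`, where the generator acts by
swapping the two factors (so the square of the generator acts trivially). -/
def swapAction (H : Type*) [Group H] : Multiplicative (ZMod 4) →* MulAut (H × H) where
  toFun z := swapAut H ^ (Multiplicative.toAdd z).val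
  map_one' := by simp
  map_mul' a b := by
    show swapAut H ^ (Multiplicative.toAdd (a * b)).val
        = swapAut H ^ (Multiplicative.toAdd a).val * swapAut H ^ (Multiplicative.toAdd b).val
    rw [← pow_add, swapAut_pow_mod H ((Multiplicative.toAdd (a * b)).val),
      swapAut_pow_mod H ((Multiplicative.toAdd a).val + (Multiplicative.toAdd b).val)]
    congr 1
    have : Multiplicative.toAdd (a * b) = Multiplicative.toAdd a + Multiplicative.toAdd b := rfl
    rw [this, ZMod.val_add]
    exact Nat.mod_mod_of_dvd _ (by norm_num)

open scoped commutatorElement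

/-- A subgroup of a perfect group containing all commutators is the whole group. -/
lemma perfect_sub_top' {H : Type*} [Group H] (hperf : commutator H = ⊤) (P : Subgroup H)
    (h : ∀ x y : H, ⁅x, y⁆ ∈ P) : P = ⊤ := by
  rw [eq_top_iff, ← hperf, commutator_def]
  exact Subgroup.commutator_le.mpr fun g₁ _ g₂ _ => h g₁ g₂

/-- Conjugation by `w * z ^ n` with `z` central equals conjugation by `w`. -/
lemma conj_mul_central' {G : Type*} [Group G] {z : G} (hz : ∀ x : G, z * x = x * z)
    (w x : G) (n : ℕ) : (w * z ^ n) * x * (w * z ^ n)⁻¹ = w * x * w⁻¹ := by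
  have h : z ^ n * x = x * z ^ n :=
    (Commute.pow_left (show Commute z x from hz x) n)
  rw [mul_assoc w (z ^ n) x, h, mul_inv_rev]
  group

/-- Commutators are unchanged by multiplying the entries by central elements. -/
lemma commutator_mul_central' {G : Type*} [Group G] {z : G} (hz : ∀ x : G, z * x = x * z)
    (u v : G) (e f : ℕ) : ⁅u * z ^ e, v * z ^ f⁆ = ⁅u, v⁆ := by
  calc ⁅u * z ^ e, v * z ^ f⁆
      = (u * z ^ e) * (v * z ^ f) * (u * z ^ e)⁻¹ * (v * z ^ f)⁻¹ :=
        commutatorElement_def _ _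
    _ = (u * (v * z ^ f) * u⁻¹) * (v * z ^ f)⁻¹ := by
        rw [conj_mul_central' hz u (v * z ^ f) e]
    _ = ⁅u, v * z ^ f⁆ := (commutatorElement_def _ _).symm
    _ = ⁅v * z ^ f, u⁆⁻¹ := by rw [commutatorElement_inv]
    _ = ((v * z ^ f) * u * (v * z ^ f)⁻¹ * u⁻¹)⁻¹ := by rw [commutatorElement_def]
    _ = (v * u * v⁻¹ * u⁻¹)⁻¹ := by rw [conj_mul_central' hz v u f]
    _ = ⁅v, u⁆⁻¹ := by rw [commutatorElement_def]
    _ = ⁅u, v⁆ := by rw [commutatorElement_inv]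

theorem stmt_19 (H : Type*) [Group H] [Finite H]
    (hperf : commutator H = ⊤)
    (a₁ c₁ a₂ c₂ : H)
    (ha₁ : Even (orderOf a₁)) (hc₁ : Even (orderOf c₁))
    (hgen1 : Subgroup.closure {a₁, c₁} = (⊤ : Subgroup H))
    (hgen2 : Subgroup.closure {a₂, c₂} = (⊤ : Subgroup H))
    (hcop : Nat.Coprime (orderOf a₁ * orderOf c₁ * orderOf (a₁ * c₁))
      (orderOf a₂ * orderOf c₂ * orderOf (a₂ * c₂))) :
    let g : Multiplicative (ZMod 4) := Multiplicative.ofAdd 1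
    let a : (H × H) ⋊[swapAction H] Multiplicative (ZMod 4) := ⟨(a₁, a₂), g ^ 2⟩
    let c : (H × H) ⋊[swapAction H] Multiplicative (ZMod 4) := ⟨(c₁, c₂), g ^ 2⟩
    Subgroup.closure {a, c} =
      Subgroup.comap SemidirectProduct.rightHom (Subgroup.zpowers (g ^ 2)) := by
  intro g a c
  set z : (H × H) ⋊[swapAction H] Multiplicative (ZMod 4) :=
    SemidirectProduct.inr (g ^ 2) with hzdef
  set K := Subgroup.closure {a, c} with hK
  have haK : a ∈ K := Subgroup.subset_closure (Set.mem_insert _ _)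
  have hcK : c ∈ K := Subgroup.subset_closure (Set.mem_insert_of_mem _ rfl)
  -- basic facts about z
  have hact : swapAction H (g ^ 2) = 1 := by
    show swapAut H ^ (Multiplicative.toAdd (g ^ 2)).val = 1
    have h2 : (Multiplicative.toAdd (g ^ 2)).val = 2 := by decide
    rw [h2, swapAut_sq]
  have hzc : ∀ x : (H × H) ⋊[swapAction H] Multiplicative (ZMod 4), z * x = x * z := by
    intro x
    rw [hzdef, SemidirectProduct.mul_def, SemidirectProduct.mul_def]
    congr 1
    · simp only [SemidirectProduct.left_inr, SemidirectProduct.right_inr, hact,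
        MulAut.one_apply, one_mul, map_one, mul_one]
    · simp only [SemidirectProduct.right_inr]
      exact mul_comm _ _
  have hz2 : z ^ 2 = 1 := by
    rw [hzdef, ← map_pow, ← map_one (SemidirectProduct.inr (φ := swapAction H))]
    congr 1
    decide
  have hzpow : ∀ k : ℕ, z ^ k = z ^ (k % 2) := by
    intro k
    conv_lhs => rw [← Nat.div_add_mod k 2]
    rw [pow_add, pow_mul, hz2, one_pow, one_mul]
  -- the embeddings of the two factors
  set φ₁ : H →* (H × H) ⋊[swapAction H] Multiplicative (ZMod 4) := SemidirectProduct.inl.comp (MonoidHom.inl H H) with hφ₁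
  set φ₂ : H →* (H × H) ⋊[swapAction H] Multiplicative (ZMod 4) := SemidirectProduct.inl.comp (MonoidHom.inr H H) with hφ₂
  -- decompositions and powers of a and c
  have hadec : a = SemidirectProduct.inl (a₁, a₂) * z := by
    rw [hzdef, ← SemidirectProduct.mk_eq_inl_mul_inr]
  have hcdec : c = SemidirectProduct.inl (c₁, c₂) * z := by
    rw [hzdef, ← SemidirectProduct.mk_eq_inl_mul_inr]
  have hcommz : ∀ x : (H × H) ⋊[swapAction H] Multiplicative (ZMod 4), Commute x z := fun x => (hzc x).symm
  have hapow : ∀ k : ℕ, a ^ k = SemidirectProduct.inl (a₁ ^ k, a₂ ^ k) * z ^ k := by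
    intro k
    rw [hadec, (hcommz _).mul_pow, ← map_pow]
    rfl
  have hcpow : ∀ k : ℕ, c ^ k = SemidirectProduct.inl (c₁ ^ k, c₂ ^ k) * z ^ k := by
    intro k
    rw [hcdec, (hcommz _).mul_pow, ← map_pow]
    rfl
  -- coprimality of relevant orders
  have hdA1 : orderOf a₁ ∣ orderOf a₁ * orderOf c₁ * orderOf (a₁ * c₁) :=
    dvd_mul_of_dvd_left (dvd_mul_right _ _) _
  have hdC1 : orderOf c₁ ∣ orderOf a₁ * orderOf c₁ * orderOf (a₁ * c₁) :=
    dvd_mul_of_dvd_left (dvd_mul_left _ _) _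
  have hdA2 : orderOf a₂ ∣ orderOf a₂ * orderOf c₂ * orderOf (a₂ * c₂) :=
    dvd_mul_of_dvd_left (dvd_mul_right _ _) _
  have hdC2 : orderOf c₂ ∣ orderOf a₂ * orderOf c₂ * orderOf (a₂ * c₂) :=
    dvd_mul_of_dvd_left (dvd_mul_left _ _) _
  have hcopA : Nat.Coprime (orderOf a₁) (orderOf a₂) :=
    Nat.Coprime.coprime_dvd_right hdA2 (Nat.Coprime.coprime_dvd_left hdA1 hcop)
  have hcopC : Nat.Coprime (orderOf c₁) (orderOf c₂) :=
    Nat.Coprime.coprime_dvd_right hdC2 (Nat.Coprime.coprime_dvd_left hdC1 hcop)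
  have h2a : (2 : ℕ) ∣ orderOf a₁ := ha₁.two_dvd
  have h2c : (2 : ℕ) ∣ orderOf c₁ := hc₁.two_dvd
  -- step 1 : φ₁ a₁ * z ∈ K
  have step1 : φ₁ a₁ * z ∈ K := by
    obtain ⟨k, hk1, hk2⟩ := Nat.chineseRemainder hcopA 1 0
    have hodd : k % 2 = 1 := by
      have h := Nat.ModEq.of_dvd h2a hk1
      unfold Nat.ModEq at h
      omega
    have h1 : a₁ ^ k = a₁ := by rw [pow_eq_pow_iff_modEq.mpr hk1, pow_one]
    have h2 : a₂ ^ k = 1 :=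
      orderOf_dvd_iff_pow_eq_one.mp ((Nat.modEq_zero_iff_dvd).mp hk2)
    have heq : a ^ k = φ₁ a₁ * z := by
      rw [hapow, h1, h2, hzpow, hodd, pow_one]
      rfl
    exact heq ▸ pow_mem haK k
  -- step 2 : φ₁ c₁ * z ∈ K
  have step2 : φ₁ c₁ * z ∈ K := by
    obtain ⟨k, hk1, hk2⟩ := Nat.chineseRemainder hcopC 1 0
    have hodd : k % 2 = 1 := by
      have h := Nat.ModEq.of_dvd h2c hk1
      unfold Nat.ModEq at h
      omega
    have h1 : c₁ ^ k = c₁ := by rw [pow_eq_pow_iff_modEq.mpr hk1, pow_one]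
    have h2 : c₂ ^ k = 1 :=
      orderOf_dvd_iff_pow_eq_one.mp ((Nat.modEq_zero_iff_dvd).mp hk2)
    have heq : c ^ k = φ₁ c₁ * z := by
      rw [hcpow, h1, h2, hzpow, hodd, pow_one]
      rfl
    exact heq ▸ pow_mem hcK k
  -- step 3 : φ₂ a₂ ∈ K
  have step3 : φ₂ a₂ ∈ K := by
    obtain ⟨k, hk1, hk2⟩ := Nat.chineseRemainder hcopA 0 1
    have heven : k % 2 = 0 := by
      have hdvd : orderOf a₁ ∣ k := (Nat.modEq_zero_iff_dvd).mp hk1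
      have h2k : (2 : ℕ) ∣ k := h2a.trans hdvd
      omega
    have h1 : a₁ ^ k = 1 := orderOf_dvd_iff_pow_eq_one.mp ((Nat.modEq_zero_iff_dvd).mp hk1)
    have h2 : a₂ ^ k = a₂ := by rw [pow_eq_pow_iff_modEq.mpr hk2, pow_one]
    have heq : a ^ k = φ₂ a₂ := by
      rw [hapow, h1, h2, hzpow, heven, pow_zero, mul_one]
      rfl
    exact heq ▸ pow_mem haK k
  -- step 4 : φ₂ c₂ ∈ K
  have step4 : φ₂ c₂ ∈ K := by
    obtain ⟨k, hk1, hk2⟩ := Nat.chineseRemainder hcopC 0 1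
    have heven : k % 2 = 0 := by
      have hdvd : orderOf c₁ ∣ k := (Nat.modEq_zero_iff_dvd).mp hk1
      have h2k : (2 : ℕ) ∣ k := h2c.trans hdvd
      omega
    have h1 : c₁ ^ k = 1 := orderOf_dvd_iff_pow_eq_one.mp ((Nat.modEq_zero_iff_dvd).mp hk1)
    have h2 : c₂ ^ k = c₂ := by rw [pow_eq_pow_iff_modEq.mpr hk2, pow_one]
    have heq : c ^ k = φ₂ c₂ := by
      rw [hcpow, h1, h2, hzpow, heven, pow_zero, mul_one]
      rfl
    exact heq ▸ pow_mem hcK k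
  -- the second factor embeds in K
  have hφ₂K : ∀ h : H, φ₂ h ∈ K := by
    have : Subgroup.closure {a₂, c₂} ≤ Subgroup.comap φ₂ K := by
      rw [Subgroup.closure_le]
      rintro x (rfl | rfl)
      · exact step3
      · exact step4
    intro h
    exact this (by rw [hgen2]; trivial)
  -- the subgroup T of elements h with φ₁ h ∈ K or φ₁ h * z ∈ K is all of H
  have hzinv : z⁻¹ = z := by
    rw [← mul_one z⁻¹, ← hz2, pow_two, ← mul_assoc, inv_mul_cancel, one_mul]
  have hT : ∀ h : H, φ₁ h ∈ K ∨ φ₁ h * z ∈ K := by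
    set T : Subgroup H :=
      { carrier := {h : H | φ₁ h ∈ K ∨ φ₁ h * z ∈ K}
        one_mem' := Or.inl (by rw [map_one]; exact K.one_mem)
        mul_mem' := by
          rintro x y (hx | hx) (hy | hy)
          · exact Or.inl (by rw [map_mul]; exact K.mul_mem hx hy)
          · exact Or.inr (by rw [map_mul, mul_assoc]; exact K.mul_mem hx hy)
          · refine Or.inr ?_
            have heq : φ₁ (x * y) * z = (φ₁ x * z) * φ₁ y := by
              rw [map_mul, mul_assoc, ← hzc (φ₁ y), ← mul_assoc]
            rw [heq]
            exact K.mul_mem hx hy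
          · refine Or.inl ?_
            have heq : φ₁ (x * y) = (φ₁ x * z) * (φ₁ y * z) := by
              rw [map_mul, mul_assoc, ← mul_assoc z, hzc (φ₁ y), mul_assoc (φ₁ y),
                ← pow_two, hz2, mul_one]
            rw [heq]
            exact K.mul_mem hx hy
        inv_mem' := by
          rintro x (hx | hx)
          · exact Or.inl (by rw [map_inv]; exact K.inv_mem hx)
          · refine Or.inr ?_
            have heq : φ₁ x⁻¹ * z = (φ₁ x * z)⁻¹ := by
              rw [mul_inv_rev, hzinv, map_inv, hzc]
            rw [heq]
            exact K.inv_mem hx } with hTdef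
    have hle : Subgroup.closure {a₁, c₁} ≤ T := by
      rw [Subgroup.closure_le]
      rintro x (rfl | rfl)
      · exact Or.inr step1
      · exact Or.inr step2
    intro h
    exact hle (by rw [hgen1]; trivial)
  -- the first factor embeds in K, via perfectness
  have hφ₁K : ∀ h : H, φ₁ h ∈ K := by
    have hcommK : ∀ u v : (H × H) ⋊[swapAction H] Multiplicative (ZMod 4), u ∈ K → v ∈ K → ⁅u, v⁆ ∈ K := by
      intro u v hu hv
      rw [commutatorElement_def]
      exact K.mul_mem (K.mul_mem (K.mul_mem hu hv) (K.inv_mem hu)) (K.inv_mem hv)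
    have hP : Subgroup.comap φ₁ K = ⊤ := by
      apply perfect_sub_top' hperf
      intro x y
      have hx' : ∃ e : ℕ, φ₁ x * z ^ e ∈ K :=
        (hT x).elim (fun h => ⟨0, by rwa [pow_zero, mul_one]⟩)
          (fun h => ⟨1, by rwa [pow_one]⟩)
      have hy' : ∃ f : ℕ, φ₁ y * z ^ f ∈ K :=
        (hT y).elim (fun h => ⟨0, by rwa [pow_zero, mul_one]⟩)
          (fun h => ⟨1, by rwa [pow_one]⟩)
      obtain ⟨e, he⟩ := hx'
      obtain ⟨f, hf⟩ := hy'
      have hc' : ⁅φ₁ x * z ^ e, φ₁ y * z ^ f⁆ ∈ K := hcommK _ _ he hf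
      rw [commutator_mul_central' hzc] at hc'
      rw [Subgroup.mem_comap, map_commutatorElement]
      exact hc'
    intro h
    have : h ∈ Subgroup.comap φ₁ K := by rw [hP]; trivial
    exact this
  -- z itself lies in K
  have hzK : z ∈ K := by
    have : (φ₁ a₁)⁻¹ * (φ₁ a₁ * z) ∈ K := K.mul_mem (K.inv_mem (hφ₁K a₁)) step1
    rwa [inv_mul_cancel_left] at this
  -- all of H × H lies in K
  have hinlK : ∀ p : H × H, SemidirectProduct.inl p ∈ K := by
    intro p
    have heq : SemidirectProduct.inl (φ := swapAction H) p = φ₁ p.1 * φ₂ p.2 := by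
      rw [hφ₁, hφ₂]
      simp only [MonoidHom.comp_apply, MonoidHom.inl_apply, MonoidHom.inr_apply, ← map_mul]
      congr 1
      ext <;> simp
    rw [heq]
    exact K.mul_mem (hφ₁K p.1) (hφ₂K p.2)
  -- conclude
  apply le_antisymm
  · rw [hK, Subgroup.closure_le]
    rintro x (rfl | rfl) <;>
      exact Subgroup.mem_comap.mpr (Subgroup.mem_zpowers _)
  · intro x hx
    rw [Subgroup.mem_comap] at hx
    obtain ⟨m, hm⟩ := Subgroup.mem_zpowers_iff.mp hx
    have hx' : x = SemidirectProduct.inl x.left * z ^ m := by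
      rw [hzdef, ← map_zpow, hm]
      exact (SemidirectProduct.inl_left_mul_inr_right x).symm
    rw [hx']
    exact K.mul_mem (hinlK x.left) (K.zpow_mem hzK m)
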